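/- arXiv:1609.04102 — 5 statements merged into one kernel-verified Lean document; each statement's English description precedes it below -/
import Mathlib

section
/- Let (Δᵢ)_{i≥0} be a sequence of sets of LTL formulas satisfying: (a) whenever X α ∈ Δᵢ then α ∈ Δᵢ₊₁, and (b) whenever α U β ∈ Δᵢ then either β ∈ Δᵢ or both α ∈ Δᵢ and X(α U β) ∈ Δᵢ, and (c) whenever X(α U β) ∈ Δᵢ then α U β ∈ Δᵢ₊₁. Then for any i with α U β ∈ Δᵢ, either there is some d ≥ i with β ∈ Δ_d and {α, α U β, X(α U β)} ⊆ Δ_f for all i ≤ f < d, or for all f ≥ i we have {α, α U β, X(α U β)} ⊆ Δ_f. -/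
/-- LTL formulas built from atoms by negation, conjunction, next and until. -/
inductive LTL (AP : Type) : Type
  | atom : AP → LTL AP
  | neg : LTL AP → LTL AP
  | and : LTL AP → LTL AP → LTL AP
  | next : LTL AP → LTL AP
  | until_ : LTL AP → LTL AP → LTL AP
  deriving DecidableEq

/-- A transition structure over state type `S`: serial relation `R` and labelling `g`. -/
structure TStruct (AP S : Type) where
  R : S → S → Prop
  serial : ∀ s, ∃ t, R s t
  g : S → Set AP

/-- The `j`-fold shift `σ≥j` of a path. -/
def shift {S : Type} (σ : ℕ → S) (j : ℕ) : ℕ → S := fun i => σ (i + j)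

/-- `σ` is a fullpath through `M`. -/
def Fullpath {AP S : Type} (M : TStruct AP S) (σ : ℕ → S) : Prop :=
  ∀ i, M.R (σ i) (σ (i + 1))

/-- Standard LTL satisfaction. -/
def Sat {AP S : Type} (M : TStruct AP S) : (ℕ → S) → LTL AP → Prop
  | σ, .atom p => p ∈ M.g (σ 0)
  | σ, .neg α => ¬ Sat M σ α
  | σ, .and α β => Sat M σ α ∧ Sat M σ β
  | σ, .next α => Sat M (shift σ 1) α
  | σ, .until_ α β => ∃ i, Sat M (shift σ i) β ∧ ∀ j < i, Sat M (shift σ j) α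

/-- propagation of until formulas along a sequence of label sets. -/
theorem until_propagation {AP : Type} (Δ : ℕ → Set (LTL AP))
    (ha : ∀ i (α : LTL AP), LTL.next α ∈ Δ i → α ∈ Δ (i + 1))
    (hb : ∀ i (α β : LTL AP), LTL.until_ α β ∈ Δ i →
      β ∈ Δ i ∨ (α ∈ Δ i ∧ LTL.next (LTL.until_ α β) ∈ Δ i))
    (hc : ∀ i (α β : LTL AP), LTL.next (LTL.until_ α β) ∈ Δ i →
      LTL.until_ α β ∈ Δ (i + 1))
    (α β : LTL AP) (i : ℕ) (h : LTL.until_ α β ∈ Δ i) :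
    (∃ d, i ≤ d ∧ β ∈ Δ d ∧ ∀ f, i ≤ f → f < d →
        α ∈ Δ f ∧ LTL.until_ α β ∈ Δ f ∧ LTL.next (LTL.until_ α β) ∈ Δ f) ∨
    (∀ f, i ≤ f → α ∈ Δ f ∧ LTL.until_ α β ∈ Δ f ∧ LTL.next (LTL.until_ α β) ∈ Δ f) := by
  set T : ℕ → Prop := fun f => α ∈ Δ f ∧ LTL.until_ α β ∈ Δ f ∧ LTL.next (LTL.until_ α β) ∈ Δ f
    with hT
  have key : ∀ n : ℕ,
      (∃ d, i ≤ d ∧ β ∈ Δ d ∧ ∀ f, i ≤ f → f < d → T f) ∨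
      ((∀ f, i ≤ f → f ≤ i + n → T f) ∧ LTL.until_ α β ∈ Δ (i + n + 1)) := by
    intro n
    induction n with
    | zero =>
      rcases hb i α β h with hβ | ⟨hα, hX⟩
      · exact Or.inl ⟨i, le_refl i, hβ, fun f hf hf' => absurd hf (by omega)⟩
      · refine Or.inr ⟨fun f hf hf' => ?_, hc i α β hX⟩
        have : f = i := by omega
        exact this ▸ ⟨hα, h, hX⟩
    | succ n ih =>
      rcases ih with hl | ⟨hall, hu⟩
      · exact Or.inl hl
      · rcases hb _ α β hu with hβ | ⟨hα, hX⟩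
        · refine Or.inl ⟨i + n + 1, by omega, hβ, fun f hf hf' => hall f hf (by omega)⟩
        · refine Or.inr ⟨fun f hf hf' => ?_, hc _ α β hX⟩
          rcases Nat.lt_or_ge f (i + n + 1) with h1 | h1
          · exact hall f hf (by omega)
          · have : f = i + n + 1 := by omega
            exact this ▸ ⟨hα, hu, hX⟩
  by_cases hL : ∃ d, i ≤ d ∧ β ∈ Δ d ∧ ∀ f, i ≤ f → f < d → T f
  · exact Or.inl hL
  · refine Or.inr fun f hf => ?_
    rcases key (f - i) with hl | ⟨hall, _⟩
    · exact absurd hl hL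
    · exact hall f hf (by omega)
end

section
/- Let (Δᵢ)_{i≥0} satisfy: whenever ¬(α U β) ∈ Δᵢ then either both ¬α, ¬β ∈ Δᵢ, or both ¬β, X¬(α U β) ∈ Δᵢ; and whenever X¬(α U β) ∈ Δᵢ then ¬(α U β) ∈ Δᵢ₊₁. Then if ¬(α U β) ∈ Δᵢ, either (1) there is some d ≥ i with ¬α, ¬β ∈ Δ_d and {¬β, ¬(α U β), X¬(α U β)} ⊆ Δ_f for all i ≤ f < d, or (2) for all d ≥ i, {¬β, ¬(α U β), X¬(α U β)} ⊆ Δ_d. -/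
/-- propagation of negated until formulas along a sequence of label sets. -/
theorem neg_until_propagation {AP : Type} (Δ : ℕ → Set (LTL AP))
    (hb : ∀ i (α β : LTL AP), LTL.neg (LTL.until_ α β) ∈ Δ i →
      (LTL.neg α ∈ Δ i ∧ LTL.neg β ∈ Δ i) ∨
      (LTL.neg β ∈ Δ i ∧ LTL.next (LTL.neg (LTL.until_ α β)) ∈ Δ i))
    (hc : ∀ i (α β : LTL AP), LTL.next (LTL.neg (LTL.until_ α β)) ∈ Δ i →
      LTL.neg (LTL.until_ α β) ∈ Δ (i + 1))
    (α β : LTL AP) (i : ℕ) (h : LTL.neg (LTL.until_ α β) ∈ Δ i) :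
    (∃ d, i ≤ d ∧ LTL.neg α ∈ Δ d ∧ LTL.neg β ∈ Δ d ∧ ∀ f, i ≤ f → f < d →
        LTL.neg β ∈ Δ f ∧ LTL.neg (LTL.until_ α β) ∈ Δ f ∧
          LTL.next (LTL.neg (LTL.until_ α β)) ∈ Δ f) ∨
    (∀ d, i ≤ d →
        LTL.neg β ∈ Δ d ∧ LTL.neg (LTL.until_ α β) ∈ Δ d ∧
          LTL.next (LTL.neg (LTL.until_ α β)) ∈ Δ d) := by
  classical
  set Q : ℕ → Prop := fun f =>
    LTL.neg β ∈ Δ f ∧ LTL.neg (LTL.until_ α β) ∈ Δ f ∧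
      LTL.next (LTL.neg (LTL.until_ α β)) ∈ Δ f with hQ
  -- membership propagates as long as Q holds below
  have key : ∀ n, (∀ f, i ≤ f → f < i + n → Q f) → LTL.neg (LTL.until_ α β) ∈ Δ (i + n) := by
    intro n
    induction n with
    | zero => intro _; simpa only [Nat.add_zero] using h
    | succ k ih =>
      intro hall
      have hk : Q (i + k) := hall _ (Nat.le_add_right _ _) (by omega)
      have := hc (i + k) α β hk.2.2
      rwa [show i + k + 1 = i + (k + 1) by omega] at this
  by_cases hcase : ∀ d, i ≤ d → Q d
  · exact Or.inr hcase
  · left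
    push_neg at hcase
    have hex : ∃ d, i ≤ d ∧ ¬ Q d := hcase
    set d := Nat.find hex with hd
    obtain ⟨hid, hnq⟩ := Nat.find_spec hex
    have hall : ∀ f, i ≤ f → f < d → Q f := by
      intro f hif hfd
      by_contra hq
      exact absurd hfd (not_lt.mpr (Nat.find_le ⟨hif, hq⟩))
    have hmem : LTL.neg (LTL.until_ α β) ∈ Δ d := by
      have := key (d - i) (by intro f hf1 hf2; exact hall f hf1 (by omega))
      rwa [show i + (d - i) = d by omega] at this
    rcases hb d α β hmem with hP | hS
    · exact ⟨d, hid, hP.1, hP.2, hall⟩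
    · exact absurd ⟨hS.1, hmem, hS.2⟩ hnq
end

section
/- Soundness of the ¬U-rule: if a fullpath σ satisfies every formula in Δ ∪ {¬(α U β)}, then either σ satisfies every formula in Δ ∪ {¬α, ¬β}, or σ satisfies every formula in Δ ∪ {¬β, X¬(α U β)}. -/
/-- soundness of the ¬U-rule. -/
theorem negU_rule_sound {AP S : Type} (M : TStruct AP S) (σ : ℕ → S)
    (hσ : Fullpath M σ) (Δ : Set (LTL AP)) (α β : LTL AP)
    (h : ∀ γ ∈ Δ ∪ {LTL.neg (LTL.until_ α β)}, Sat M σ γ) :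
    (∀ γ ∈ Δ ∪ {LTL.neg α, LTL.neg β}, Sat M σ γ) ∨
    (∀ γ ∈ Δ ∪ {LTL.neg β, LTL.next (LTL.neg (LTL.until_ α β))}, Sat M σ γ) := by
  have hΔ : ∀ γ ∈ Δ, Sat M σ γ := fun γ hγ => h γ (Or.inl hγ)
  have hnu : ¬ Sat M σ (LTL.until_ α β) := h _ (Or.inr rfl)
  have hσ0 : shift σ 0 = σ := by funext n; simp [shift]
  have hnb : ¬ Sat M σ β := fun hb => hnu ⟨0, by rw [hσ0]; exact hb, fun j hj => absurd hj (Nat.not_lt_zero j)⟩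
  by_cases ha : Sat M σ α
  · right
    intro γ hγ
    rcases hγ with hγ | hγ | hγ
    · exact hΔ γ hγ
    · subst hγ; exact hnb
    · simp only [Set.mem_singleton_iff] at hγ
      subst hγ
      intro ⟨i, hb, hall⟩
      refine hnu ⟨i + 1, ?_, ?_⟩
      · have : shift σ (i + 1) = shift (shift σ 1) i := by
          funext n; simp [shift]; ring_nf
        rw [this]; exact hb
      · intro j hj
        cases j with
        | zero => rw [hσ0]; exact ha
        | succ k =>
          have : shift σ (k + 1) = shift (shift σ 1) k := by
            funext n; simp [shift]; ring_nf
          rw [this]; exact hall k (by omega)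
  · left
    intro γ hγ
    rcases hγ with hγ | hγ | hγ
    · exact hΔ γ hγ
    · subst hγ; exact ha
    · simp only [Set.mem_singleton_iff] at hγ; subst hγ; exact hnb
end

section
/- Any finished tableau branch has finite length bounded in terms of the number K of possible labels: a sequence of poised-label occurrences along a branch in which no label occurs more than some fixed finite number of times (as enforced by the PRUNE rule, which forbids a label from recurring without progress on any of at most E eventualities) has length at most 2·(E+1)·K, where E is the number of X-eventualities in the closure set. Abstractly: if L is a finite set of size K, f : ℕ → L is a sequence, and there is a function m : ℕ → Fin (E+1) which is weakly monotone such that whenever f(i) = f(j) = f(k) with i < j < k and m(j) = m(k) we have a contradiction (no element of L appears three times within a level of m), then the domain of f is finite with size at most 2·(E+1)·K. -/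
/-- a sequence over `K` labels with a weakly monotone progress level
in `{0,...,E}`, in which no label occurs at three positions `i < j < k` with the
same level at `j` and `k` (the PRUNE condition), has length at most `2·(E+1)·K`. -/
theorem prune_length_bound (L : Type) [Fintype L] (K E n : ℕ)
    (hK : Fintype.card L = K)
    (f : Fin n → L) (m : Fin n → Fin (E + 1)) (hm : Monotone m)
    (h : ∀ i j k : Fin n, i < j → j < k → f i = f j → f j = f k → m j = m k → False) :
    n ≤ 2 * (E + 1) * K := by
  classical
  set g : Fin n → Fin (E + 1) × L := fun i => (m i, f i) with hg
  have key : ∀ b ∈ (Finset.univ.image g), ((Finset.univ : Finset (Fin n)).filter (fun a => g a = b)).card ≤ 2 := by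
    intro b _
    by_contra hc
    push_neg at hc
    obtain ⟨a, b', c, ha, hb', hc', hab, hac, hbc⟩ := Finset.two_lt_card_iff.mp hc
    simp only [Finset.mem_filter, Finset.mem_univ, true_and, hg, Prod.ext_iff] at ha hb' hc'
    -- a b' c are distinct, m and f agree on all of them
    have hma : m a = m b' := ha.1.trans hb'.1.symm
    have hmb : m b' = m c := hb'.1.trans hc'.1.symm
    have hfa : f a = f b' := ha.2.trans hb'.2.symm
    have hfb : f b' = f c := hb'.2.trans hc'.2.symm
    have hmac : m a = m c := hma.trans hmb
    have hfac : f a = f c := hfa.trans hfb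
    rcases hab.lt_or_gt with h1 | h1 <;> rcases hac.lt_or_gt with h2 | h2 <;>
      rcases hbc.lt_or_gt with h3 | h3
    · exact h a b' c h1 h3 hfa hfb hmb
    · exact h a c b' h2 h3 hfac hfb.symm hmb.symm
    · exact absurd (h1.trans h3) (lt_asymm h2)
    · exact h c a b' h2 h1 hfac.symm hfa hma
    · exact h b' a c h1 h2 hfa.symm hfac hmac
    · exact absurd (h2.trans h3) (lt_asymm h1)
    · exact h b' c a h3 h2 hfb hfac.symm hmac.symm
    · exact h c b' a h3 h1 hfb.symm hfa.symm hma.symm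
  have := Finset.card_le_mul_card_image (f := g) Finset.univ 2 key
  simp only [Finset.card_univ, Fintype.card_fin] at this
  calc n ≤ 2 * (Finset.univ.image g).card := this
    _ ≤ 2 * Fintype.card (Fin (E+1) × L) := by
        gcongr; exact (Finset.card_le_card (Finset.subset_univ _)).trans (by simp)
    _ = 2 * (E + 1) * K := by simp [Fintype.card_prod, hK, mul_assoc]
end

section
/- Every satisfiable LTL formula has an ultimately periodic (lasso) model: if some fullpath in some structure satisfies φ, then there exist natural numbers N ≥ 0 and M ≥ 1 and a fullpath σ with σ_{i+M} = σ_i for all i ≥ N such that σ satisfies φ. -/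
/-- A formula is satisfiable iff some fullpath through some finite structure satisfies it. -/
def Satisfiable {AP : Type} (φ : LTL AP) : Prop :=
  ∃ (S : Type) (_ : Fintype S) (M : TStruct AP S) (σ : ℕ → S),
    Fullpath M σ ∧ Sat M σ φ

/-- A formula is valid iff every fullpath through every finite structure satisfies it. -/
def Valid {AP : Type} (φ : LTL AP) : Prop :=
  ∀ (S : Type) [Fintype S] (M : TStruct AP S) (σ : ℕ → S),
    Fullpath M σ → Sat M σ φ

namespace LassoAux

lemma shift_shift {S : Type} (σ : ℕ → S) (a b : ℕ) :
    shift (shift σ a) b = shift σ (b + a) := by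
  funext n; simp [shift, Nat.add_assoc]

lemma shift_zero {S : Type} (σ : ℕ → S) : shift σ 0 = σ := rfl

lemma sat_next_iff {AP S : Type} (M : TStruct AP S) (σ : ℕ → S) (m : ℕ) (α : LTL AP) :
    Sat M (shift σ m) (.next α) ↔ Sat M (shift σ (m + 1)) α := by
  simp [Sat, shift_shift, Nat.add_comm]

lemma sat_until_iff {AP S : Type} (M : TStruct AP S) (σ : ℕ → S) (m : ℕ) (α β : LTL AP) :
    Sat M (shift σ m) (.until_ α β) ↔
      ∃ k, Sat M (shift σ (m + k)) β ∧ ∀ j < k, Sat M (shift σ (m + j)) α := by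
  simp [Sat, shift_shift, Nat.add_comm]

lemma until_step {AP S : Type} (M : TStruct AP S) (σ : ℕ → S) (m : ℕ) (α β : LTL AP)
    (hα : Sat M (shift σ m) α) (h : Sat M (shift σ (m + 1)) (.until_ α β)) :
    Sat M (shift σ m) (.until_ α β) := by
  rw [sat_until_iff] at h ⊢
  obtain ⟨k, hb, ha⟩ := h
  refine ⟨k + 1, by rwa [show m + (k+1) = m + 1 + k by omega], ?_⟩
  intro j hj
  rcases j with _ | j
  · simpa using hα
  · rw [show m + (j+1) = m + 1 + j by omega]; exact ha j (by omega)

/-- Subformula list. -/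
def subf {AP : Type} : LTL AP → List (LTL AP)
  | .atom p => [.atom p]
  | .neg a => .neg a :: subf a
  | .and a b => .and a b :: (subf a ++ subf b)
  | .next a => .next a :: subf a
  | .until_ a b => .until_ a b :: (subf a ++ subf b)

lemma self_mem_subf {AP : Type} (ψ : LTL AP) : ψ ∈ subf ψ := by
  cases ψ <;> simp [subf]

lemma subf_closed {AP : Type} : ∀ (ψ χ : LTL AP), χ ∈ subf ψ → subf χ ⊆ subf ψ := by
  intro ψ
  induction ψ with
  | atom p => intro χ h; simp [subf] at h; subst h; simp [subf]
  | neg a ih =>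
      intro χ h
      rcases (by simpa [subf] using h : χ = .neg a ∨ χ ∈ subf a) with rfl | h
      · exact fun _ h => h
      · exact fun x hx => by simpa [subf] using Or.inr (ih χ h hx)
  | and a b iha ihb =>
      intro χ h
      rcases (by simpa [subf] using h : χ = .and a b ∨ χ ∈ subf a ∨ χ ∈ subf b) with rfl | h | h
      · exact fun _ h => h
      · exact fun x hx => by simp [subf]; exact Or.inr (Or.inl (iha χ h hx))
      · exact fun x hx => by simp [subf]; exact Or.inr (Or.inr (ihb χ h hx))
  | next a ih =>
      intro χ h
      rcases (by simpa [subf] using h : χ = .next a ∨ χ ∈ subf a) with rfl | h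
      · exact fun _ h => h
      · exact fun x hx => by simpa [subf] using Or.inr (ih χ h hx)
  | until_ a b iha ihb =>
      intro χ h
      rcases (by simpa [subf] using h : χ = .until_ a b ∨ χ ∈ subf a ∨ χ ∈ subf b) with rfl | h | h
      · exact fun _ h => h
      · exact fun x hx => by simp [subf]; exact Or.inr (Or.inl (iha χ h hx))
      · exact fun x hx => by simp [subf]; exact Or.inr (Or.inr (ihb χ h hx))

lemma mem_of_neg_mem {AP : Type} {φ a : LTL AP} (h : LTL.neg a ∈ subf φ) : a ∈ subf φ :=
  subf_closed φ _ h (by simp [subf, self_mem_subf])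
lemma mem_of_and_mem_left {AP : Type} {φ a b : LTL AP} (h : LTL.and a b ∈ subf φ) : a ∈ subf φ :=
  subf_closed φ _ h (by simp [subf, self_mem_subf])
lemma mem_of_and_mem_right {AP : Type} {φ a b : LTL AP} (h : LTL.and a b ∈ subf φ) : b ∈ subf φ :=
  subf_closed φ _ h (by simp [subf, self_mem_subf])
lemma mem_of_next_mem {AP : Type} {φ a : LTL AP} (h : LTL.next a ∈ subf φ) : a ∈ subf φ :=
  subf_closed φ _ h (by simp [subf, self_mem_subf])
lemma mem_of_until_mem_left {AP : Type} {φ a b : LTL AP} (h : LTL.until_ a b ∈ subf φ) : a ∈ subf φ :=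
  subf_closed φ _ h (by simp [subf, self_mem_subf])
lemma mem_of_until_mem_right {AP : Type} {φ a b : LTL AP} (h : LTL.until_ a b ∈ subf φ) : b ∈ subf φ :=
  subf_closed φ _ h (by simp [subf, self_mem_subf])

/-- The lasso reindexing function. -/
def lf (i₀ i₁ : ℕ) (i : ℕ) : ℕ := if i < i₁ then i else i₀ + (i - i₀) % (i₁ - i₀)

lemma lf_lt (i₀ i₁ : ℕ) (h : i₀ < i₁) (i : ℕ) : lf i₀ i₁ i < i₁ := by
  unfold lf
  split
  · assumption
  · have := Nat.mod_lt (i - i₀) (y := i₁ - i₀) (by omega)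
    omega

lemma succ_mod (a p : ℕ) (hp : 0 < p) :
    (a + 1) % p = if a % p + 1 = p then 0 else a % p + 1 := by
  have hd := Nat.div_add_mod a p
  have hm : a % p < p := Nat.mod_lt a hp
  split
  · next hc =>
      conv_lhs => rw [show a + 1 = p * (a / p) + p by omega]
      simp [Nat.mul_add_mod]
  · next hc =>
      conv_lhs => rw [show a + 1 = p * (a / p) + (a % p + 1) by omega]
      rw [Nat.mul_add_mod, Nat.mod_eq_of_lt (by omega)]

lemma lf_step (i₀ i₁ : ℕ) (h : i₀ < i₁) (i : ℕ) :
    lf i₀ i₁ (i + 1) = lf i₀ i₁ i + 1 ∨ (lf i₀ i₁ (i + 1) = i₀ ∧ lf i₀ i₁ i + 1 = i₁) := by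
  unfold lf
  rcases lt_trichotomy (i+1) i₁ with h1 | h1 | h1
  · left; simp [h1, show i < i₁ by omega]
  · right
    rw [if_neg (by omega), if_pos (by omega)]
    rw [show i + 1 - i₀ = i₁ - i₀ by omega, Nat.mod_self]
    omega
  · rw [if_neg (by omega), if_neg (by omega)]
    rw [show i + 1 - i₀ = (i - i₀) + 1 by omega,
      succ_mod (i - i₀) (i₁ - i₀) (by omega)]
    have hm : (i - i₀) % (i₁ - i₀) < i₁ - i₀ := Nat.mod_lt _ (by omega)
    split
    · right; omega
    · left; omega

lemma lf_add (i₀ i₁ : ℕ) (h : i₀ < i₁) :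
    ∀ (j i : ℕ), lf i₀ i₁ i + j < i₁ → lf i₀ i₁ (i + j) = lf i₀ i₁ i + j := by
  intro j
  induction j with
  | zero => intro i _; rfl
  | succ j ih =>
      intro i hj
      have h1 := ih i (by omega)
      rcases lf_step i₀ i₁ h (i + j) with h2 | h2
      · rw [show i + (j+1) = i + j + 1 by omega, h2, h1]; omega
      · omega

lemma lf_zero (i₀ i₁ : ℕ) (h : 0 < i₁) : lf i₀ i₁ 0 = 0 := by simp [lf, h]

lemma lf_period (i₀ i₁ : ℕ) (h : i₀ < i₁) (i : ℕ) (hi : i₁ ≤ i) :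
    lf i₀ i₁ (i + (i₁ - i₀)) = lf i₀ i₁ i := by
  unfold lf
  simp [show ¬ i + (i₁ - i₀) < i₁ by omega, show ¬ i < i₁ by omega,
    show i + (i₁ - i₀) - i₀ = (i - i₀) + (i₁ - i₀) by omega, Nat.add_mod_right]


section Main

variable {AP S : Type} (M : TStruct AP S) (σ : ℕ → S) (φ : LTL AP) (i₀ i₁ : ℕ)

lemma main_lemma (h : i₀ < i₁)
    (H1 : ∀ ψ ∈ subf φ, (Sat M (shift σ i₀) ψ ↔ Sat M (shift σ i₁) ψ))
    (H3 : ∀ α β, LTL.until_ α β ∈ subf φ → Sat M (shift σ i₀) (.until_ α β) →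
      ∃ k, i₀ + k < i₁ ∧ Sat M (shift σ (i₀ + k)) β ∧ ∀ j < k, Sat M (shift σ (i₀ + j)) α) :
    ∀ ψ, ψ ∈ subf φ → ∀ i,
      (Sat M (shift (fun n => σ (lf i₀ i₁ n)) i) ψ ↔ Sat M (shift σ (lf i₀ i₁ i)) ψ) := by
  intro ψ
  induction ψ with
  | atom p => intro _ i; simp [Sat, shift]
  | neg a ih =>
      intro hmem i
      simp only [Sat]
      exact not_congr (ih (mem_of_neg_mem hmem) i)
  | and a b iha ihb =>
      intro hmem i
      simp only [Sat]
      exact and_congr (iha (mem_of_and_mem_left hmem) i) (ihb (mem_of_and_mem_right hmem) i)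
  | next a ih =>
      intro hmem i
      rw [sat_next_iff, sat_next_iff]
      rw [ih (mem_of_next_mem hmem) (i + 1)]
      rcases lf_step i₀ i₁ h i with hs | ⟨hs0, hs1⟩
      · rw [hs]
      · rw [hs0, hs1]
        exact H1 a (mem_of_next_mem hmem)
  | until_ a b iha ihb =>
      intro hmem i
      have ha' : a ∈ subf φ := mem_of_until_mem_left hmem
      have hb' : b ∈ subf φ := mem_of_until_mem_right hmem
      have claim_fwd : ∀ k i, Sat M (shift σ (lf i₀ i₁ (i + k))) b →
          (∀ j < k, Sat M (shift σ (lf i₀ i₁ (i + j))) a) →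
          Sat M (shift σ (lf i₀ i₁ i)) (.until_ a b) := by
        intro k
        induction k with
        | zero =>
            intro i hb0 _
            rw [sat_until_iff]
            exact ⟨0, hb0, fun j hj => absurd hj (Nat.not_lt_zero j)⟩
        | succ k ihk =>
            intro i hbk hak
            have hα : Sat M (shift σ (lf i₀ i₁ i)) a := hak 0 (by omega)
            have hnext : Sat M (shift σ (lf i₀ i₁ (i + 1))) (.until_ a b) := by
              apply ihk (i + 1)
              · rwa [show i + 1 + k = i + (k + 1) by omega]
              · intro j hj
                rw [show i + 1 + j = i + (j + 1) by omega]
                exact hak (j + 1) (by omega)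
            rcases lf_step i₀ i₁ h i with hs | ⟨hs0, hs1⟩
            · rw [hs] at hnext
              exact until_step M σ _ a b hα hnext
            · rw [hs0] at hnext
              have h1 : Sat M (shift σ i₁) (.until_ a b) := (H1 _ hmem).mp hnext
              rw [← hs1] at h1
              exact until_step M σ _ a b hα h1
      have claim_bwd : ∀ k i, Sat M (shift σ (lf i₀ i₁ i + k)) b →
          (∀ j < k, Sat M (shift σ (lf i₀ i₁ i + j)) a) →
          ∃ k', Sat M (shift σ (lf i₀ i₁ (i + k'))) b ∧
            ∀ j < k', Sat M (shift σ (lf i₀ i₁ (i + j))) a := by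
        intro k
        induction k with
        | zero =>
            intro i hb0 _
            exact ⟨0, hb0, fun j hj => absurd hj (Nat.not_lt_zero j)⟩
        | succ k ihk =>
            intro i hbk hak
            have hα : Sat M (shift σ (lf i₀ i₁ i)) a := hak 0 (by omega)
            rcases lf_step i₀ i₁ h i with hs | ⟨hs0, hs1⟩
            · have h1 : Sat M (shift σ (lf i₀ i₁ (i+1) + k)) b := by
                rw [hs, show lf i₀ i₁ i + 1 + k = lf i₀ i₁ i + (k + 1) by omega]
                exact hbk
              have h2 : ∀ j < k, Sat M (shift σ (lf i₀ i₁ (i+1) + j)) a := by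
                intro j hj
                rw [hs, show lf i₀ i₁ i + 1 + j = lf i₀ i₁ i + (j + 1) by omega]
                exact hak (j + 1) (by omega)
              obtain ⟨k', hk'b, hk'a⟩ := ihk (i + 1) h1 h2
              refine ⟨k' + 1, ?_, ?_⟩
              · rwa [show i + (k' + 1) = (i + 1) + k' by omega]
              · intro j hj
                rcases j with _ | j
                · exact hα
                · rw [show i + (j + 1) = (i + 1) + j by omega]
                  exact hk'a j (by omega)
            · -- wrap: lf (i+1) = i₀, lf i + 1 = i₁
              have hu1 : Sat M (shift σ i₁) (.until_ a b) := by
                rw [sat_until_iff]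
                refine ⟨k, ?_, ?_⟩
                · rw [show i₁ + k = lf i₀ i₁ i + (k + 1) by omega]; exact hbk
                · intro j hj
                  rw [show i₁ + j = lf i₀ i₁ i + (j + 1) by omega]
                  exact hak (j + 1) (by omega)
              have hu0 : Sat M (shift σ i₀) (.until_ a b) := (H1 _ hmem).mpr hu1
              obtain ⟨k₀, hlt, hb0, ha0⟩ := H3 a b hmem hu0
              refine ⟨k₀ + 1, ?_, ?_⟩
              · have he : lf i₀ i₁ ((i + 1) + k₀) = i₀ + k₀ := by
                  have := lf_add i₀ i₁ h k₀ (i + 1)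
                  rw [hs0] at this
                  exact this hlt
                rw [show i + (k₀ + 1) = (i + 1) + k₀ by omega, he]
                exact hb0
              · intro j hj
                rcases j with _ | j
                · exact hα
                · have hj' : j < k₀ := by omega
                  have he : lf i₀ i₁ ((i + 1) + j) = i₀ + j := by
                    have := lf_add i₀ i₁ h j (i + 1)
                    rw [hs0] at this
                    exact this (by omega)
                  rw [show i + (j + 1) = (i + 1) + j by omega, he]
                  exact ha0 j hj'
      rw [sat_until_iff, sat_until_iff]
      constructor
      · rintro ⟨k, hkb, hka⟩
        have := claim_fwd k i ((ihb hb' (i + k)).mp hkb)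
          (fun j hj => (iha ha' (i + j)).mp (hka j hj))
        rwa [sat_until_iff] at this
      · rintro ⟨k, hkb, hka⟩
        obtain ⟨k', h1, h2⟩ := claim_bwd k i hkb hka
        exact ⟨k', (ihb hb' (i + k')).mpr h1, fun j hj => (iha ha' (i + j)).mpr (h2 j hj)⟩

end Main
end LassoAux

open LassoAux in
/-- every satisfiable LTL formula has an ultimately periodic (lasso) model. -/
theorem lasso_model_exists {AP : Type} (φ : LTL AP) (h : Satisfiable φ) :
    ∃ (S : Type) (_ : Fintype S) (M : TStruct AP S) (σ : ℕ → S) (N Mp : ℕ),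
      Fullpath M σ ∧ 1 ≤ Mp ∧ (∀ i, N ≤ i → σ (i + Mp) = σ i) ∧ Sat M σ φ := by
  obtain ⟨S, instS, M, σ, hfull, hsat⟩ := h
  classical
  haveI : Finite {x // x ∈ subf φ} := ((subf φ).finite_toSet).to_subtype
  set T : ℕ → S × ({x // x ∈ subf φ} → Prop) :=
    fun i => (σ i, fun ψ => Sat M (shift σ i) ψ.1) with hT
  obtain ⟨v, hv⟩ := Finite.exists_infinite_fiber T
  have hinf : (T ⁻¹' {v}).Infinite := Set.infinite_coe_iff.mp hv
  obtain ⟨i₀, hi₀⟩ := hinf.nonempty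
  -- a bound on until-witnesses at i₀
  have hKex : ∀ l : List (LTL AP), ∃ K, ∀ α β, LTL.until_ α β ∈ l →
      Sat M (shift σ i₀) (.until_ α β) →
      ∃ k ≤ K, Sat M (shift σ (i₀ + k)) β ∧ ∀ j < k, Sat M (shift σ (i₀ + j)) α := by
    intro l
    induction l with
    | nil => exact ⟨0, by simp⟩
    | cons ψ l ih =>
        obtain ⟨K, hK⟩ := ih
        by_cases hc : ∃ α β, ψ = LTL.until_ α β ∧ Sat M (shift σ i₀) ψ
        · obtain ⟨α, β, rfl, hs⟩ := hc
          rw [sat_until_iff] at hs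
          obtain ⟨k, hkb, hka⟩ := hs
          refine ⟨max K k, ?_⟩
          intro α' β' hmem hsat'
          rcases List.mem_cons.mp hmem with heq | hmem'
          · cases heq
            exact ⟨k, le_max_right _ _, hkb, hka⟩
          · obtain ⟨k', hk', rest⟩ := hK α' β' hmem' hsat'
            exact ⟨k', le_trans hk' (le_max_left _ _), rest⟩
        · refine ⟨K, ?_⟩
          intro α' β' hmem hsat'
          rcases List.mem_cons.mp hmem with heq | hmem'
          · exact absurd ⟨α', β', heq.symm, by rw [← heq]; exact hsat'⟩ hc
          · exact hK α' β' hmem' hsat'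
  obtain ⟨K, hK⟩ := hKex (subf φ)
  obtain ⟨i₁, hi₁mem, hi₁gt⟩ := hinf.exists_gt (i₀ + K)
  have h01 : i₀ < i₁ := by omega
  have hTeq : T i₀ = T i₁ := by
    have e0 : T i₀ = v := hi₀
    have e1 : T i₁ = v := hi₁mem
    rw [e0, e1]
  have H2 : σ i₀ = σ i₁ := congrArg Prod.fst hTeq
  have H1 : ∀ ψ ∈ subf φ, (Sat M (shift σ i₀) ψ ↔ Sat M (shift σ i₁) ψ) := by
    intro ψ hmem
    exact iff_of_eq (congrFun (congrArg Prod.snd hTeq) ⟨ψ, hmem⟩)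
  have H3 : ∀ α β, LTL.until_ α β ∈ subf φ → Sat M (shift σ i₀) (.until_ α β) →
      ∃ k, i₀ + k < i₁ ∧ Sat M (shift σ (i₀ + k)) β ∧ ∀ j < k, Sat M (shift σ (i₀ + j)) α := by
    intro α β hmem hsat'
    obtain ⟨k, hkK, hb, ha⟩ := hK α β hmem hsat'
    exact ⟨k, by omega, hb, ha⟩
  refine ⟨S, instS, M, fun n => σ (lf i₀ i₁ n), i₁, i₁ - i₀, ?_, by omega, ?_, ?_⟩
  · intro i
    show M.R (σ (lf i₀ i₁ i)) (σ (lf i₀ i₁ (i + 1)))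
    rcases lf_step i₀ i₁ h01 i with hs | ⟨hs0, hs1⟩
    · rw [hs]; exact hfull (lf i₀ i₁ i)
    · rw [hs0, H2]
      have := hfull (lf i₀ i₁ i)
      rwa [hs1] at this
  · intro i hi
    exact congrArg σ (lf_period i₀ i₁ h01 i hi)
  · have := main_lemma M σ φ i₀ i₁ h01 H1 H3 φ (self_mem_subf φ) 0
    rw [lf_zero i₀ i₁ (by omega), shift_zero] at this
    exact this.mpr hsat
end
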